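/- Let $D \ge 1$, $\delta > 0$, $a,b,\gamma,\varepsilon \in \mathbb{R}$ with $a \le b$ and $\varepsilon - \gamma < 0$. Define, for integers $m \ge n$, $\lambda_{m,n} = \sum_{k=-\infty}^{n-1} D e^{a(m-k-1)+\varepsilon|k+1|} \cdot \delta e^{-\gamma|k+1|} \cdot D e^{b(k-n)+\varepsilon|n|} + \sum_{k=n}^{m-1} D e^{a(m-k-1)+\varepsilon|k+1|} \cdot \delta e^{-\gamma|k+1|} \cdot D e^{a(k-n)+\varepsilon|n|} + \sum_{k=m}^{\infty} D e^{b(m-k-1)+\varepsilon|k+1|} \cdot \delta e^{-\gamma|k+1|} \cdot D e^{a(k-n)+\varepsilon|n|}$. Then $\lambda_{m,n} \le D e^{a(m-n)+\varepsilon|n|} \cdot D\delta e^{-a}(e^{\varepsilon-\gamma}+1)(1-e^{\varepsilon-\gamma})^{-1}$ for all $m \ge n$. -/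

import Mathlib

open Real

/-- Series estimate for `λ_{m,n}` in the robustness of nonuniform exponential dichotomies
on `ℤ`. -/
theorem stmt_1 (D δ a b γ ε : ℝ) (hD : 1 ≤ D) (hδ : 0 < δ) (hab : a ≤ b)
    (heg : ε - γ < 0) (m n : ℤ) (hmn : n ≤ m) :
    (∑' k : {k : ℤ // k < n},
        D * exp (a * ((m : ℝ) - (k : ℤ) - 1) + ε * |((k : ℤ) : ℝ) + 1|) *
          (δ * exp (-γ * |((k : ℤ) : ℝ) + 1|)) *
          (D * exp (b * (((k : ℤ) : ℝ) - n) + ε * |(n : ℝ)|)))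
      + (∑ k ∈ Finset.Ico n m,
        D * exp (a * ((m : ℝ) - k - 1) + ε * |(k : ℝ) + 1|) *
          (δ * exp (-γ * |(k : ℝ) + 1|)) *
          (D * exp (a * ((k : ℝ) - n) + ε * |(n : ℝ)|)))
      + (∑' k : {k : ℤ // m ≤ k},
        D * exp (b * ((m : ℝ) - (k : ℤ) - 1) + ε * |((k : ℤ) : ℝ) + 1|) *
          (δ * exp (-γ * |((k : ℤ) : ℝ) + 1|)) *
          (D * exp (a * (((k : ℤ) : ℝ) - n) + ε * |(n : ℝ)|)))
      ≤ D * exp (a * ((m : ℝ) - n) + ε * |(n : ℝ)|) *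
          (D * δ * exp (-a) * (exp (ε - γ) + 1) * (1 - exp (ε - γ))⁻¹) := by
  set q : ℝ := exp (ε - γ) with hqdef
  have hq0 : 0 < q := exp_pos _
  have hq1 : q < 1 := exp_lt_one_iff.mpr heg
  set g : ℤ → ℝ := fun k => exp ((ε - γ) * |(k : ℝ) + 1|) with hgdef
  have hgnonneg : ∀ k : ℤ, 0 ≤ g k := fun k => (exp_pos _).le
  -- the full sum of `g` over `ℤ`
  have hnatAbs : ∀ j : ℤ, exp ((ε - γ) * |(j : ℝ)|) = q ^ j.natAbs := by
    intro j
    have h1 : |(j : ℝ)| = (j.natAbs : ℝ) := by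
      rw [Nat.cast_natAbs, Int.cast_abs]
    rw [h1, mul_comm, exp_nat_mul]
  have hfsum : HasSum (fun j : ℤ => exp ((ε - γ) * |(j : ℝ)|)) ((1 + q) * (1 - q)⁻¹) := by
    have h1 : HasSum (fun j : ℕ => exp ((ε - γ) * |((j : ℤ) : ℝ)|)) ((1 - q)⁻¹) := by
      have := hasSum_geometric_of_lt_one hq0.le hq1
      convert this using 2 with j
      rw [hnatAbs]; simp
    have h2 : HasSum (fun j : ℕ => exp ((ε - γ) * |((-(j + 1) : ℤ) : ℝ)|))
        (q * (1 - q)⁻¹) := by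
      have := (hasSum_geometric_of_lt_one hq0.le hq1).mul_left q
      convert this using 2 with j
      · rfl
      rw [hnatAbs]
      have hj : (-((j : ℤ) + 1)).natAbs = j + 1 := by omega
      rw [hj, pow_succ]
      ring
    have := HasSum.of_nat_of_neg_add_one (f := fun j : ℤ => exp ((ε - γ) * |(j : ℝ)|)) h1 h2
    convert this using 1
    ring
  have hgsum : HasSum g ((1 + q) * (1 - q)⁻¹) := by
    have h := ((Equiv.addRight (1 : ℤ)).hasSum_iff).mpr hfsum
    have hgeq : g = (fun j : ℤ => exp ((ε - γ) * |(j : ℝ)|)) ∘ (Equiv.addRight (1 : ℤ)) := by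
      funext k
      simp only [hgdef, Function.comp, Equiv.coe_addRight]
      push_cast
      ring_nf
    rw [hgeq]
    exact h
  have hgS : Summable g := hgsum.summable
  -- the constant
  set C : ℝ := D * exp (a * ((m : ℝ) - n) + ε * |(n : ℝ)|) * (D * δ * exp (-a)) with hCdef
  have hC0 : 0 ≤ C := by positivity
  have expand : ∀ u v w : ℝ, D * exp u * (δ * exp v) * (D * exp w)
      = D * D * δ * exp (u + v + w) := by
    intro u v w; rw [exp_add, exp_add]; ring
  have expandC : ∀ k : ℤ, C * g k
      = D * D * δ * exp ((a * ((m : ℝ) - n) + ε * |(n : ℝ)|) + -a + (ε - γ) * |(k : ℝ) + 1|) := by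
    intro k
    simp only [hCdef, hgdef]
    simp only [exp_add]
    ring
  have hDDδ : (0 : ℝ) ≤ D * D * δ := by positivity
  -- termwise bounds in the three regions
  have hb1 : ∀ k : ℤ, k < n →
      D * exp (a * ((m : ℝ) - k - 1) + ε * |(k : ℝ) + 1|) * (δ * exp (-γ * |(k : ℝ) + 1|)) *
        (D * exp (b * ((k : ℝ) - n) + ε * |(n : ℝ)|)) ≤ C * g k := by
    intro k hk
    rw [expand, expandC]
    apply mul_le_mul_of_nonneg_left _ hDDδ
    apply exp_le_exp.mpr
    have hk' : (k : ℝ) ≤ (n : ℝ) := by exact_mod_cast hk.le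
    nlinarith [mul_nonneg (sub_nonneg.2 hab) (sub_nonneg.2 hk')]
  have hb2 : ∀ k : ℤ,
      D * exp (a * ((m : ℝ) - k - 1) + ε * |(k : ℝ) + 1|) * (δ * exp (-γ * |(k : ℝ) + 1|)) *
        (D * exp (a * ((k : ℝ) - n) + ε * |(n : ℝ)|)) ≤ C * g k := by
    intro k
    rw [expand, expandC]
    apply mul_le_mul_of_nonneg_left _ hDDδ
    apply exp_le_exp.mpr
    ring_nf
    linarith [le_refl (0 : ℝ)]
  have hb3 : ∀ k : ℤ, m ≤ k →
      D * exp (b * ((m : ℝ) - k - 1) + ε * |(k : ℝ) + 1|) * (δ * exp (-γ * |(k : ℝ) + 1|)) *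
        (D * exp (a * ((k : ℝ) - n) + ε * |(n : ℝ)|)) ≤ C * g k := by
    intro k hk
    rw [expand, expandC]
    apply mul_le_mul_of_nonneg_left _ hDDδ
    apply exp_le_exp.mpr
    have hk' : (m : ℝ) ≤ (k : ℝ) := by exact_mod_cast hk
    nlinarith [mul_nonneg (sub_nonneg.2 hab) (by linarith : (0:ℝ) ≤ (k : ℝ) - m + 1)]
  -- summability of the bounding functions on the subtypes
  have hCg : Summable (fun k : ℤ => C * g k) := hgS.mul_left C
  have hCg1 : Summable (fun k : {k : ℤ // k < n} => C * g k) := hCg.subtype (Set.Iio n)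
  have hCg3 : Summable (fun k : {k : ℤ // m ≤ k} => C * g k) := hCg.subtype (Set.Ici m)
  -- summability of the actual terms
  have hS1 : Summable (fun k : {k : ℤ // k < n} =>
      D * exp (a * ((m : ℝ) - (k : ℤ) - 1) + ε * |((k : ℤ) : ℝ) + 1|) *
        (δ * exp (-γ * |((k : ℤ) : ℝ) + 1|)) *
        (D * exp (b * (((k : ℤ) : ℝ) - n) + ε * |(n : ℝ)|))) := by
    refine Summable.of_nonneg_of_le (fun k => ?_) (fun k => hb1 k.1 k.2) hCg1
    positivity
  have hS3 : Summable (fun k : {k : ℤ // m ≤ k} =>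
      D * exp (b * ((m : ℝ) - (k : ℤ) - 1) + ε * |((k : ℤ) : ℝ) + 1|) *
        (δ * exp (-γ * |((k : ℤ) : ℝ) + 1|)) *
        (D * exp (a * (((k : ℤ) : ℝ) - n) + ε * |(n : ℝ)|))) := by
    refine Summable.of_nonneg_of_le (fun k => ?_) (fun k => hb3 k.1 k.2) hCg3
    positivity
  -- bound the three pieces
  have hP1 : (∑' k : {k : ℤ // k < n},
      D * exp (a * ((m : ℝ) - (k : ℤ) - 1) + ε * |((k : ℤ) : ℝ) + 1|) *
        (δ * exp (-γ * |((k : ℤ) : ℝ) + 1|)) *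
        (D * exp (b * (((k : ℤ) : ℝ) - n) + ε * |(n : ℝ)|)))
      ≤ C * ∑' k : {k : ℤ // k < n}, g k := by
    rw [← tsum_mul_left]
    exact hS1.tsum_le_tsum (fun k => hb1 k.1 k.2) hCg1
  have hP2 : (∑ k ∈ Finset.Ico n m,
      D * exp (a * ((m : ℝ) - k - 1) + ε * |(k : ℝ) + 1|) *
        (δ * exp (-γ * |(k : ℝ) + 1|)) *
        (D * exp (a * ((k : ℝ) - n) + ε * |(n : ℝ)|)))
      ≤ C * ∑ k ∈ Finset.Ico n m, g k := by
    rw [Finset.mul_sum]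
    exact Finset.sum_le_sum fun k _ => hb2 k
  have hP3 : (∑' k : {k : ℤ // m ≤ k},
      D * exp (b * ((m : ℝ) - (k : ℤ) - 1) + ε * |((k : ℤ) : ℝ) + 1|) *
        (δ * exp (-γ * |((k : ℤ) : ℝ) + 1|)) *
        (D * exp (a * (((k : ℤ) : ℝ) - n) + ε * |(n : ℝ)|)))
      ≤ C * ∑' k : {k : ℤ // m ≤ k}, g k := by
    rw [← tsum_mul_left]
    exact hS3.tsum_le_tsum (fun k => hb3 k.1 k.2) hCg3
  -- the three pieces of the sum of `g` add up to the full sum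
  have s1 : Summable ((Set.Iio n).indicator g) := hgS.indicator _
  have s2 : Summable ((Set.Ico n m).indicator g) := hgS.indicator _
  have s3 : Summable ((Set.Ici m).indicator g) := hgS.indicator _
  have hadd : ∀ k : ℤ, (Set.Iio n).indicator g k + (Set.Ico n m).indicator g k
      + (Set.Ici m).indicator g k = g k := by
    intro k
    rcases lt_or_ge k n with h1 | h1
    · rw [Set.indicator_of_mem (Set.mem_Iio.mpr h1), Set.indicator_of_notMem (by simp [Set.mem_Ico]; omega),
        Set.indicator_of_notMem (by simp [Set.mem_Ici]; omega)]
      ring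
    · rcases lt_or_ge k m with h2 | h2
      · rw [Set.indicator_of_notMem (by simp [Set.mem_Iio]; omega),
          Set.indicator_of_mem (Set.mem_Ico.mpr ⟨h1, h2⟩),
          Set.indicator_of_notMem (by simp [Set.mem_Ici]; omega)]
        ring
      · rw [Set.indicator_of_notMem (by simp [Set.mem_Iio]; omega),
          Set.indicator_of_notMem (by simp [Set.mem_Ico]; omega),
          Set.indicator_of_mem (Set.mem_Ici.mpr h2)]
        ring
  have hsplit : (∑' k : {k : ℤ // k < n}, g k) + (∑ k ∈ Finset.Ico n m, g k)
      + (∑' k : {k : ℤ // m ≤ k}, g k) = (1 + q) * (1 - q)⁻¹ := by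
    have hIio : (∑' k : {k : ℤ // k < n}, g k) = ∑' k : ℤ, (Set.Iio n).indicator g k :=
      tsum_subtype (Set.Iio n) g
    have hIci : (∑' k : {k : ℤ // m ≤ k}, g k) = ∑' k : ℤ, (Set.Ici m).indicator g k :=
      tsum_subtype (Set.Ici m) g
    have hIco : (∑ k ∈ Finset.Ico n m, g k) = ∑' k : ℤ, (Set.Ico n m).indicator g k := by
      rw [← tsum_subtype, ← Finset.coe_Ico, Finset.tsum_subtype']
    rw [hIio, hIci, hIco, ← s1.tsum_add s2, ← (s1.add s2).tsum_add s3,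
      tsum_congr hadd]
    exact hgsum.tsum_eq
  -- put it all together
  calc _ ≤ C * (∑' k : {k : ℤ // k < n}, g k) + C * (∑ k ∈ Finset.Ico n m, g k)
        + C * (∑' k : {k : ℤ // m ≤ k}, g k) := by
        exact add_le_add (add_le_add hP1 hP2) hP3
    _ = C * ((∑' k : {k : ℤ // k < n}, g k) + (∑ k ∈ Finset.Ico n m, g k)
        + (∑' k : {k : ℤ // m ≤ k}, g k)) := by ring
    _ = C * ((1 + q) * (1 - q)⁻¹) := by rw [hsplit]
    _ = D * exp (a * ((m : ℝ) - n) + ε * |(n : ℝ)|) *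
          (D * δ * exp (-a) * (exp (ε - γ) + 1) * (1 - exp (ε - γ))⁻¹) := by
        rw [hCdef, hqdef]; ring
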